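/- arXiv:2201.06801 — 2 statements merged into one kernel-verified Lean document; each statement's English description precedes it below -/
import Mathlib

section
/- For every L(1,2)-edge labeling f of G_v and every edge e in S_2, at most two edges of G_v have label f(e)+1, and at most two edges of G_v have label f(e)−1. -/
/-- The infinite triangular grid `T6`. -/
def T6 : SimpleGraph (ℤ × ℤ) where
  Adj u v := (v.1 - u.1, v.2 - u.2) ∈
    ({(1,0), (-1,0), (0,1), (0,-1), (1,1), (-1,-1)} : Set (ℤ × ℤ))
  symm := by
    constructor
    rintro ⟨a, b⟩ ⟨c, d⟩ h
    simp only [Set.mem_insert_iff, Set.mem_singleton_iff, Prod.mk.injEq] at h ⊢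
    omega
  loopless := by
    constructor
    rintro ⟨a, b⟩ h
    simp only [Set.mem_insert_iff, Set.mem_singleton_iff, Prod.mk.injEq, sub_self] at h
    omega

/-- `f` is an L(1,2)-edge labeling of `G`. -/
def IsL12 {V : Type*} (G : SimpleGraph V) (f : Sym2 V → ℕ) : Prop :=
  (∀ e1 ∈ G.edgeSet, ∀ e2 ∈ G.edgeSet, e1 ≠ e2 → (∃ v, v ∈ e1 ∧ v ∈ e2) →
    f e1 ≠ f e2) ∧
  (∀ e1 ∈ G.edgeSet, ∀ e2 ∈ G.edgeSet, e1 ≠ e2 → ¬ (∃ v, v ∈ e1 ∧ v ∈ e2) →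
    (∃ e3 ∈ G.edgeSet, (∃ v, v ∈ e1 ∧ v ∈ e3) ∧ (∃ v, v ∈ e2 ∧ v ∈ e3)) →
    2 ≤ |(f e1 : ℤ) - (f e2 : ℤ)|)

/-- The subgraph `G_v` of `T6`: all edges with an endpoint adjacent to `v`. -/
def Gv (v : ℤ × ℤ) : SimpleGraph (ℤ × ℤ) where
  Adj u w := T6.Adj u w ∧ (T6.Adj v u ∨ T6.Adj v w)
  symm := ⟨fun u w h => ⟨T6.adj_symm h.1, h.2.symm⟩⟩
  loopless := ⟨fun u h => T6.loopless.irrefl u h.1⟩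

/-- `S_1`: the edges of `G_v` incident to `v`. -/
def S1 (v : ℤ × ℤ) : Set (Sym2 (ℤ × ℤ)) := {e | e ∈ (Gv v).edgeSet ∧ v ∈ e}

/-- `S_2`: the edges of `G_v` both of whose endpoints are adjacent to `v`. -/
def S2 (v : ℤ × ℤ) : Set (Sym2 (ℤ × ℤ)) := {e | e ∈ (Gv v).edgeSet ∧ ∀ u ∈ e, T6.Adj v u}

/-- `S_3`: the remaining edges of `G_v`. -/
def S3 (v : ℤ × ℤ) : Set (Sym2 (ℤ × ℤ)) := (Gv v).edgeSet \ (S1 v ∪ S2 v)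


set_option synthInstance.maxHeartbeats 1000000
set_option synthInstance.maxSize 2000

/-! ### Auxiliary geometric lemmas -/

def Dirs : List (ℤ × ℤ) := [(1,0),(-1,0),(0,1),(0,-1),(1,1),(-1,-1)]

lemma key : ∀ du ∈ Dirs, ∀ dw ∈ Dirs, ∀ dz1 ∈ Dirs, ∀ dz2 ∈ Dirs,
    ((dw.1 - du.1, dw.2 - du.2) ∈ Dirs →
    dz1 ≠ du → dz1 ≠ dw → (du.1 - dz1.1, du.2 - dz1.2) ∉ Dirs →
    (dw.1 - dz1.1, dw.2 - dz1.2) ∉ Dirs →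
    dz2 ≠ du → dz2 ≠ dw → (du.1 - dz2.1, du.2 - dz2.2) ∉ Dirs →
    (dw.1 - dz2.1, dw.2 - dz2.2) ∉ Dirs →
    dz1 = dz2 ∨ (dz2.1 - dz1.1, dz2.2 - dz1.2) ∈ Dirs) := by decide

lemma adjD {a b : ℤ × ℤ} : T6.Adj a b ↔ (b.1 - a.1, b.2 - a.2) ∈ Dirs := by
  simp [T6, Dirs]

set_option maxHeartbeats 4000000 in
lemma far_pair {v u w z1 z2 : ℤ × ℤ}
    (hvu : T6.Adj v u) (hvw : T6.Adj v w) (huw : T6.Adj u w)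
    (hz1 : T6.Adj v z1) (hz2 : T6.Adj v z2)
    (h1u : z1 ≠ u) (h1w : z1 ≠ w) (h1au : ¬ T6.Adj z1 u) (h1aw : ¬ T6.Adj z1 w)
    (h2u : z2 ≠ u) (h2w : z2 ≠ w) (h2au : ¬ T6.Adj z2 u) (h2aw : ¬ T6.Adj z2 w) :
    z1 = z2 ∨ T6.Adj z1 z2 := by
  rw [adjD] at hvu hvw huw hz1 hz2 h1au h1aw h2au h2aw ⊢
  have h := key _ hvu _ hvw _ hz1 _ hz2
  simp only [Dirs, List.mem_cons, List.not_mem_nil, or_false, Prod.mk.injEq, ne_eq,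
    Prod.ext_iff, not_or, not_and] at h hvu hvw huw hz1 hz2 h1au h1aw h2au h2aw ⊢
  rw [Ne, Prod.ext_iff, not_and] at h1u h1w h2u h2w
  have h2 := h (by clear * - huw; omega) (by clear * - h1u; omega)
    (by clear * - h1w; omega) (by clear * - h1au; omega) (by clear * - h1aw; omega)
    (by clear * - h2u; omega) (by clear * - h2w; omega) (by clear * - h2au; omega)
    (by clear * - h2aw; omega)
  clear * - h2
  omega

/-! ### Auxiliary labeling lemmas -/

lemma conflict {V : Type*} {G : SimpleGraph V} {f : Sym2 V → ℕ} (hf : IsL12 G f)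
    {e1 e2 : Sym2 V} (h1 : e1 ∈ G.edgeSet) (h2 : e2 ∈ G.edgeSet) (hne : e1 ≠ e2)
    (hlab : f e1 = f e2)
    (hw : ∃ e3 ∈ G.edgeSet, (∃ z, z ∈ e1 ∧ z ∈ e3) ∧ (∃ z, z ∈ e2 ∧ z ∈ e3)) : False := by
  by_cases hsh : ∃ z, z ∈ e1 ∧ z ∈ e2
  · exact hf.1 e1 h1 e2 h2 hne hsh hlab
  · have h := hf.2 e1 h1 e2 h2 hne hsh hw
    rw [hlab] at h
    simp at h

lemma mem_nbr (v : ℤ × ℤ) : ∀ e ∈ (Gv v).edgeSet, ∃ z, z ∈ e ∧ T6.Adj v z := by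
  intro e
  induction e using Sym2.ind with
  | _ x y =>
    intro h
    rw [SimpleGraph.mem_edgeSet] at h
    rcases h.2 with h2 | h2
    · exact ⟨x, by simp, h2⟩
    · exact ⟨y, by simp, h2⟩

lemma no_touch_far (v u w : ℤ × ℤ) (f : Sym2 (ℤ × ℤ) → ℕ) (hf : IsL12 (Gv v) f)
    (heE : s(u,w) ∈ (Gv v).edgeSet) {t : ℤ}
    (ht1 : t ≠ (f s(u,w) : ℤ)) (ht2 : (f s(u,w) : ℤ) - 1 ≤ t ∧ t ≤ (f s(u,w) : ℤ) + 1)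
    {e1 : Sym2 (ℤ × ℤ)} (h1 : e1 ∈ (Gv v).edgeSet) (hfa : (f e1 : ℤ) = t)
    (hnt : ¬ ∃ z, z ∈ e1 ∧ z ∈ s(u,w)) :
    ∃ z, z ∈ e1 ∧ T6.Adj v z ∧ z ≠ u ∧ z ≠ w ∧ ¬ T6.Adj z u ∧ ¬ T6.Adj z w := by
  obtain ⟨z, hz1, hzv⟩ := mem_nbr v e1 h1
  have hne : e1 ≠ s(u,w) := by
    intro h; rw [h] at hfa; exact ht1 hfa.symm
  refine ⟨z, hz1, hzv, ?_, ?_, ?_, ?_⟩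
  · rintro rfl; exact hnt ⟨z, hz1, by simp⟩
  · rintro rfl; exact hnt ⟨z, hz1, by simp⟩
  · intro hzu
    have he3 : s(z,u) ∈ (Gv v).edgeSet := by
      rw [SimpleGraph.mem_edgeSet]; exact ⟨hzu, Or.inl hzv⟩
    have h := hf.2 e1 h1 _ heE hne hnt ⟨s(z,u), he3, ⟨z, hz1, by simp⟩, ⟨u, by simp, by simp⟩⟩
    rw [le_abs] at h
    omega
  · intro hzw
    have he3 : s(z,w) ∈ (Gv v).edgeSet := by
      rw [SimpleGraph.mem_edgeSet]; exact ⟨hzw, Or.inl hzv⟩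
    have h := hf.2 e1 h1 _ heE hne hnt ⟨s(z,w), he3, ⟨z, hz1, by simp⟩, ⟨w, by simp, by simp⟩⟩
    rw [le_abs] at h
    omega

lemma main_aux (v u w : ℤ × ℤ) (f : Sym2 (ℤ × ℤ) → ℕ) (hf : IsL12 (Gv v) f)
    (he : s(u,w) ∈ S2 v) {t : ℤ}
    (ht1 : t ≠ (f s(u,w) : ℤ)) (ht2 : (f s(u,w) : ℤ) - 1 ≤ t ∧ t ≤ (f s(u,w) : ℤ) + 1) :
    ∀ e1 ∈ (Gv v).edgeSet, ∀ e2 ∈ (Gv v).edgeSet, ∀ e3 ∈ (Gv v).edgeSet,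
      (f e1 : ℤ) = t → (f e2 : ℤ) = t → (f e3 : ℤ) = t →
      e1 = e2 ∨ e1 = e3 ∨ e2 = e3 := by
  obtain ⟨heE, hS2⟩ := he
  have hvu : T6.Adj v u := hS2 u (by simp)
  have hvw : T6.Adj v w := hS2 w (by simp)
  have huw : T6.Adj u w := ((SimpleGraph.mem_edgeSet (Gv v)).1 heE).1
  intro e1 h1 e2 h2 e3 h3 g1 g2 g3
  have touch_pair : ∀ {a b : Sym2 (ℤ × ℤ)}, a ∈ (Gv v).edgeSet → b ∈ (Gv v).edgeSet →
      (f a : ℤ) = t → (f b : ℤ) = t →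
      (∃ z, z ∈ a ∧ z ∈ s(u,w)) → (∃ z, z ∈ b ∧ z ∈ s(u,w)) → a ≠ b → False := by
    intro a b ha hb hfa hfb Ta Tb hab
    have hlab : f a = f b := by exact_mod_cast hfa.trans hfb.symm
    exact conflict hf ha hb hab hlab ⟨s(u,w), heE, Ta, Tb⟩
  have far_conf : ∀ {a b : Sym2 (ℤ × ℤ)}, a ∈ (Gv v).edgeSet → b ∈ (Gv v).edgeSet →
      (f a : ℤ) = t → (f b : ℤ) = t →
      ¬ (∃ z, z ∈ a ∧ z ∈ s(u,w)) → ¬ (∃ z, z ∈ b ∧ z ∈ s(u,w)) → a ≠ b → False := by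
    intro a b ha hb hfa hfb Ta Tb hab
    have hlab : f a = f b := by exact_mod_cast hfa.trans hfb.symm
    obtain ⟨za, hza, hzav, hzau, hzaw, hzaau, hzaaw⟩ :=
      no_touch_far v u w f hf heE ht1 ht2 ha hfa Ta
    obtain ⟨zb, hzb, hzbv, hzbu, hzbw, hzbau, hzbaw⟩ :=
      no_touch_far v u w f hf heE ht1 ht2 hb hfb Tb
    rcases far_pair hvu hvw huw hzav hzbv hzau hzaw hzaau hzaaw hzbu hzbw hzbau hzbaw with
      heq | hadj
    · exact hf.1 a ha b hb hab ⟨za, hza, heq ▸ hzb⟩ hlab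
    · have he3 : s(za,zb) ∈ (Gv v).edgeSet := by
        rw [SimpleGraph.mem_edgeSet]; exact ⟨hadj, Or.inl hzav⟩
      exact conflict hf ha hb hab hlab ⟨s(za,zb), he3, ⟨za, hza, by simp⟩, ⟨zb, hzb, by simp⟩⟩
  by_cases T1 : ∃ z, z ∈ e1 ∧ z ∈ s(u,w) <;>
  by_cases T2 : ∃ z, z ∈ e2 ∧ z ∈ s(u,w) <;>
  by_cases T3 : ∃ z, z ∈ e3 ∧ z ∈ s(u,w)
  · exact Or.inl (by by_contra h; exact touch_pair h1 h2 g1 g2 T1 T2 h)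
  · exact Or.inl (by by_contra h; exact touch_pair h1 h2 g1 g2 T1 T2 h)
  · exact Or.inr (Or.inl (by by_contra h; exact touch_pair h1 h3 g1 g3 T1 T3 h))
  · exact Or.inr (Or.inr (by by_contra h; exact far_conf h2 h3 g2 g3 T2 T3 h))
  · exact Or.inr (Or.inr (by by_contra h; exact touch_pair h2 h3 g2 g3 T2 T3 h))
  · exact Or.inr (Or.inl (by by_contra h; exact far_conf h1 h3 g1 g3 T1 T3 h))
  · exact Or.inl (by by_contra h; exact far_conf h1 h2 g1 g2 T1 T2 h)
  · exact Or.inl (by by_contra h; exact far_conf h1 h2 g1 g2 T1 T2 h)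

/-- For an edge `e ∈ S_2`, at most two edges of `G_v` have label `f e + 1`, and at
most two edges of `G_v` have label `f e - 1`. -/
theorem S2_adjacent_labels_at_most_twice (v : ℤ × ℤ) (f : Sym2 (ℤ × ℤ) → ℕ)
    (hf : IsL12 (Gv v) f) : ∀ e ∈ S2 v,
    (∀ e1 ∈ (Gv v).edgeSet, ∀ e2 ∈ (Gv v).edgeSet, ∀ e3 ∈ (Gv v).edgeSet,
      f e1 = f e + 1 → f e2 = f e + 1 → f e3 = f e + 1 →
      e1 = e2 ∨ e1 = e3 ∨ e2 = e3) ∧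
    (∀ e1 ∈ (Gv v).edgeSet, ∀ e2 ∈ (Gv v).edgeSet, ∀ e3 ∈ (Gv v).edgeSet,
      (f e1 : ℤ) = (f e : ℤ) - 1 → (f e2 : ℤ) = (f e : ℤ) - 1 →
      (f e3 : ℤ) = (f e : ℤ) - 1 → e1 = e2 ∨ e1 = e3 ∨ e2 = e3) := by
  intro e he
  revert he
  induction e using Sym2.ind with
  | _ u w =>
    intro he
    constructor
    · intro e1 h1 e2 h2 e3 h3 g1 g2 g3
      exact main_aux v u w f hf he (t := (f s(u,w) : ℤ) + 1) (by omega) ⟨by omega, by omega⟩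
        e1 h1 e2 h2 e3 h3 (by exact_mod_cast congrArg (Nat.cast : ℕ → ℤ) g1)
        (by exact_mod_cast congrArg (Nat.cast : ℕ → ℤ) g2)
        (by exact_mod_cast congrArg (Nat.cast : ℕ → ℤ) g3)
    · intro e1 h1 e2 h2 e3 h3 g1 g2 g3
      exact main_aux v u w f hf he (t := (f s(u,w) : ℤ) - 1) (by omega) ⟨by omega, by omega⟩
        e1 h1 e2 h2 e3 h3 g1 g2 g3
end

section
/- For every L(1,2)-edge labeling f of G_v and every nonnegative integer c: if each of the three consecutive values c, c+1 and c+2 is the label of three edges of S_3, then no edge of S_3 has label c−1 and no edge of S_3 has label c+3. -/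
/-- The label `c` is used on (at least) three edges of `S_3`. -/
def UsedThriceInS3 (v : ℤ × ℤ) (f : Sym2 (ℤ × ℤ) → ℕ) (c : ℕ) : Prop :=
  ∃ e1 e2 e3, e1 ∈ S3 v ∧ e2 ∈ S3 v ∧ e3 ∈ S3 v ∧
    e1 ≠ e2 ∧ e1 ≠ e3 ∧ e2 ≠ e3 ∧ f e1 = c ∧ f e2 = c ∧ f e3 = c

set_option maxRecDepth 100000 in
def tgOff1 : Fin 18 → ℤ × ℤ := ![((-2 : ℤ), (-2 : ℤ)), ((-2 : ℤ), (-1 : ℤ)), ((-2 : ℤ), (-1 : ℤ)), ((-2 : ℤ), (0 : ℤ)), ((-1 : ℤ), (-2 : ℤ)), ((-1 : ℤ), (-2 : ℤ)), ((-1 : ℤ), (0 : ℤ)), ((-1 : ℤ), (1 : ℤ)), ((0 : ℤ), (-2 : ℤ)), ((0 : ℤ), (-1 : ℤ)), ((0 : ℤ), (1 : ℤ)), ((0 : ℤ), (1 : ℤ)), ((1 : ℤ), (-1 : ℤ)), ((1 : ℤ), (0 : ℤ)), ((1 : ℤ), (0 : ℤ)), ((1 : ℤ), (1 : ℤ)),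 ((1 : ℤ), (1 : ℤ)), ((1 : ℤ), (1 : ℤ))]
def tgOff2 : Fin 18 → ℤ × ℤ := ![((-1 : ℤ), (-1 : ℤ)), ((-1 : ℤ), (-1 : ℤ)), ((-1 : ℤ), (0 : ℤ)), ((-1 : ℤ), (0 : ℤ)), ((-1 : ℤ), (-1 : ℤ)), ((0 : ℤ), (-1 : ℤ)), ((-1 : ℤ), (1 : ℤ)), ((0 : ℤ), (1 : ℤ)), ((0 : ℤ), (-1 : ℤ)), ((1 : ℤ), (-1 : ℤ)), ((0 : ℤ), (2 : ℤ)), ((1 : ℤ), (2 : ℤ)), ((1 : ℤ), (0 : ℤ)), ((2 : ℤ), (0 : ℤ)), ((2 : ℤ), (1 : ℤ)), ((1 : ℤ), (2 : ℤ)), ((2 : ℤ), (1 : ℤ)), ((2 : ℤ), (2 : ℤ))]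
def tgGe1 : Fin 30 → ℤ × ℤ := ![((-2 : ℤ), (-2 : ℤ)), ((-2 : ℤ), (-1 : ℤ)), ((-2 : ℤ), (-1 : ℤ)), ((-2 : ℤ), (0 : ℤ)), ((-1 : ℤ), (-2 : ℤ)), ((-1 : ℤ), (-2 : ℤ)), ((-1 : ℤ), (-1 : ℤ)), ((-1 : ℤ), (-1 : ℤ)), ((-1 : ℤ), (-1 : ℤ)), ((-1 : ℤ), (0 : ℤ)), ((-1 : ℤ), (0 : ℤ)), ((-1 : ℤ), (0 : ℤ)), ((-1 : ℤ), (1 : ℤ)), ((0 : ℤ), (-2 : ℤ)), ((0 : ℤ), (-1 : ℤ)), ((0 : ℤ), (-1 : ℤ)), ((0 : ℤ), (-1 : ℤ)), ((0 : ℤ), (0 : ℤ)), ((0 : ℤ), (0 : ℤ)), ((0 : ℤ), (0 : ℤ)), ((0 : ℤ), (1 : ℤ)), ((0 : ℤ), (1 : ℤ)), ((0 : ℤ), (1 : ℤ)), ((1 : ℤ), (-1 : ℤ)), ((1 : ℤ), (0 : ℤ)), ((1 : ℤ), (0 : ℤ)), ((1 : ℤ), (0 : ℤ)), ((1 : ℤ),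 (1 : ℤ)), ((1 : ℤ), (1 : ℤ)), ((1 : ℤ), (1 : ℤ))]
def tgGe2 : Fin 30 → ℤ × ℤ := ![((-1 : ℤ), (-1 : ℤ)), ((-1 : ℤ), (-1 : ℤ)), ((-1 : ℤ), (0 : ℤ)), ((-1 : ℤ), (0 : ℤ)), ((-1 : ℤ), (-1 : ℤ)), ((0 : ℤ), (-1 : ℤ)), ((-1 : ℤ), (0 : ℤ)), ((0 : ℤ), (-1 : ℤ)), ((0 : ℤ), (0 : ℤ)), ((-1 : ℤ), (1 : ℤ)), ((0 : ℤ), (0 : ℤ)), ((0 : ℤ), (1 : ℤ)), ((0 : ℤ), (1 : ℤ)), ((0 : ℤ), (-1 : ℤ)), ((0 : ℤ), (0 : ℤ)), ((1 : ℤ), (-1 : ℤ)), ((1 : ℤ), (0 : ℤ)), ((0 : ℤ), (1 : ℤ)), ((1 : ℤ), (0 : ℤ)), ((1 : ℤ), (1 : ℤ)), ((0 : ℤ), (2 : ℤ)), ((1 : ℤ), (1 : ℤ)), ((1 : ℤ), (2 : ℤ)), ((1 : ℤ), (0 : ℤ)), ((1 : ℤ), (1 : ℤ)), ((2 : ℤ),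 (0 : ℤ)), ((2 : ℤ), (1 : ℤ)), ((1 : ℤ), (2 : ℤ)), ((2 : ℤ), (1 : ℤ)), ((2 : ℤ), (2 : ℤ))]
def tgE (v : ℤ × ℤ) (i : Fin 18) : Sym2 (ℤ × ℤ) := s(v + tgOff1 i, v + tgOff2 i)
def tgAdjB (a b : ℤ × ℤ) : Bool := decide ((b.1 - a.1 = 1 ∧ b.2 - a.2 = 0) ∨ (b.1 - a.1 = -1 ∧ b.2 - a.2 = 0) ∨ (b.1 - a.1 = 0 ∧ b.2 - a.2 = 1) ∨ (b.1 - a.1 = 0 ∧ b.2 - a.2 = -1) ∨ (b.1 - a.1 = 1 ∧ b.2 - a.2 = 1) ∨ (b.1 - a.1 = -1 ∧ b.2 - a.2 = -1))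
def tgShareB (i j : Fin 18) : Bool := decide (tgOff1 i = tgOff1 j) || decide (tgOff1 i = tgOff2 j) || decide (tgOff2 i = tgOff1 j) || decide (tgOff2 i = tgOff2 j)
def tgTouchB (g : Fin 30) (i : Fin 18) : Bool := decide (tgGe1 g = tgOff1 i) || decide (tgGe1 g = tgOff2 i) || decide (tgGe2 g = tgOff1 i) || decide (tgGe2 g = tgOff2 i)
def tgD2B (i j : Fin 18) : Bool := !tgShareB i j && decide (∃ g : Fin 30, tgTouchB g i = true ∧ tgTouchB g j = true)
def tgFarT : Fin 18 → Fin 18 → Bool := ![![false, false, false, false, false, false, false, true, false, false, true, true, true, true, true, true, true, true],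
  ![false, false, false, false, false, false, false, true, false, false, true, true, true, true, true, true, true, true],
  ![false, false, false, false, false, true, false, false, true, true, false, false, true, true, true, true, true, true],
  ![false, false, false, false, false, true, false, false, true, true, false, false, true, true, true, true, true, true],
  ![false, false, false, false, false, false, false, true, false, false, true, true, true, true, true, true, true, true],
  ![false, false, true, true, false, false, true, true, false, false, true, true, false, false, false, true, true, true],
  ![false, false, false, false, false, true, false, false, true, true, false, false, true, true, true, true, true, true],
  ![true, true, false, false, true, true, false, false, true, true, false, false, true, true, true, false, false, false],
  ![false, false, true, true, false, false, true, true, false, false, true, true, false, false, false, true, true, true],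
  ![false, false, true, true, false, false, true, true, false, false, true, true, false, false, false, true, true, true],
  ![true, true, false, false, true, true, false, false, true, true, false, false, true, true, true, false, false, false],
  ![true, true, false, false, true, true, false, false, true, true, false, false, true, true, true, false, false, false],
  ![true, true, true, true, true, false, true, true, false, false, true, true, false, false, false, false, false, false],
  ![true, true, true, true, true, false, true, true, false, false, true, true, false, false, false, false, false, false],
  ![true, true, true, true, true, false, true, true, false, false, true, true, false, false, false, false, false, false],
  ![true, true, true, true, true, true, true, false, true, true, false, false, false, false, false, false, false, false],
  ![true, true, true, true, true, true, true, false, true, true, false, false, false, false, false, false, false, false],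
  ![true, true, true, true, true, true, true, false, true, true, false, false, false, false, false, false, false, false]]
def tgCls : Fin 18 → Bool := ![true, true, false, false, true, false, false, true, false, false, true, true, true, true, true, false, false, false]
def tgFan : Fin 18 → Fin 3 := ![0, 0, 0, 0, 0, 1, 0, 1, 1, 1, 1, 1, 2, 2, 2, 2, 2, 2]
def tgPos : Fin 18 → Fin 3 := ![0, 1, 0, 1, 2, 0, 2, 0, 1, 2, 1, 2, 0, 1, 2, 0, 1, 2]
def tgEnc (b : Bool) (F p : Fin 3) : Fin 18 :=
  if b then ![![0, 1, 4], ![7, 10, 11], ![12, 13, 14]] F p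
  else ![![2, 3, 6], ![5, 8, 9], ![15, 16, 17]] F p

set_option maxHeartbeats 2000000
set_option maxRecDepth 100000

lemma T6_adj_iff (u w : ℤ × ℤ) : T6.Adj u w ↔
    (w.1 - u.1, w.2 - u.2) ∈ ({(1,0), (-1,0), (0,1), (0,-1), (1,1), (-1,-1)} : Set (ℤ × ℤ)) :=
  Iff.rfl

lemma Gv_adj_iff (v x y : ℤ × ℤ) : (Gv v).Adj x y ↔ T6.Adj x y ∧ (T6.Adj v x ∨ T6.Adj v y) :=
  Iff.rfl

lemma tg_t6_adj_of (v a b : ℤ × ℤ) (h : tgAdjB a b = true) : T6.Adj (v + a) (v + b) := by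
  have h' := of_decide_eq_true h
  rw [T6_adj_iff]
  simp only [Set.mem_insert_iff, Set.mem_singleton_iff, Prod.mk.injEq, Prod.fst_add,
    Prod.snd_add]
  omega

lemma tg_gv_adj_of (v a b : ℤ × ℤ) (h1 : tgAdjB a b = true)
    (h2 : tgAdjB 0 a = true ∨ tgAdjB 0 b = true) : (Gv v).Adj (v + a) (v + b) := by
  rw [Gv_adj_iff]
  refine ⟨tg_t6_adj_of v a b h1, ?_⟩
  rcases h2 with h | h
  · left; have := tg_t6_adj_of v 0 a h; rwa [add_zero] at this
  · right; have := tg_t6_adj_of v 0 b h; rwa [add_zero] at this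

lemma tgE_mem (v : ℤ × ℤ) (i : Fin 18) : tgE v i ∈ (Gv v).edgeSet := by
  have hc : ∀ i : Fin 18, tgAdjB (tgOff1 i) (tgOff2 i) = true ∧
      (tgAdjB 0 (tgOff1 i) = true ∨ tgAdjB 0 (tgOff2 i) = true) := by decide
  exact (Gv v).mem_edgeSet.mpr (tg_gv_adj_of v _ _ (hc i).1 (hc i).2)

lemma tgGE_mem (v : ℤ × ℤ) (g : Fin 30) : s(v + tgGe1 g, v + tgGe2 g) ∈ (Gv v).edgeSet := by
  have hc : ∀ g : Fin 30, tgAdjB (tgGe1 g) (tgGe2 g) = true ∧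
      (tgAdjB 0 (tgGe1 g) = true ∨ tgAdjB 0 (tgGe2 g) = true) := by decide
  exact (Gv v).mem_edgeSet.mpr (tg_gv_adj_of v _ _ (hc g).1 (hc g).2)

lemma tgE_ne {v : ℤ × ℤ} {i j : Fin 18} (hij : i ≠ j) : tgE v i ≠ tgE v j := by
  have H : ∀ i j : Fin 18, i ≠ j →
      ¬((tgOff1 i = tgOff1 j ∧ tgOff2 i = tgOff2 j) ∨
        (tgOff1 i = tgOff2 j ∧ tgOff2 i = tgOff1 j)) := by decide
  intro h
  rw [tgE, tgE, Sym2.eq_iff] at h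
  rcases h with ⟨h1, h2⟩ | ⟨h1, h2⟩
  · exact H i j hij (Or.inl ⟨add_left_cancel h1, add_left_cancel h2⟩)
  · exact H i j hij (Or.inr ⟨add_left_cancel h1, add_left_cancel h2⟩)

lemma tg_lab_ne (v : ℤ × ℤ) (f : Sym2 (ℤ × ℤ) → ℕ) (hf : IsL12 (Gv v) f) {i j : Fin 18}
    (hs : tgShareB i j = true) (hij : i ≠ j) : f (tgE v i) ≠ f (tgE v j) := by
  apply hf.1 _ (tgE_mem v i) _ (tgE_mem v j) (tgE_ne hij)
  simp only [tgShareB, Bool.or_eq_true, decide_eq_true_eq] at hs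
  rcases hs with ((h | h) | h) | h
  · exact ⟨v + tgOff1 i, Sym2.mem_mk_left _ _, by rw [tgE, h]; exact Sym2.mem_mk_left _ _⟩
  · exact ⟨v + tgOff1 i, Sym2.mem_mk_left _ _, by rw [tgE, h]; exact Sym2.mem_mk_right _ _⟩
  · exact ⟨v + tgOff2 i, Sym2.mem_mk_right _ _, by rw [tgE, h]; exact Sym2.mem_mk_left _ _⟩
  · exact ⟨v + tgOff2 i, Sym2.mem_mk_right _ _, by rw [tgE, h]; exact Sym2.mem_mk_right _ _⟩

lemma tg_touch (v : ℤ × ℤ) (g : Fin 30) (i : Fin 18) (h : tgTouchB g i = true) :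
    ∃ u, u ∈ s(v + tgGe1 g, v + tgGe2 g) ∧ u ∈ tgE v i := by
  simp only [tgTouchB, Bool.or_eq_true, decide_eq_true_eq] at h
  rcases h with ((h | h) | h) | h
  · exact ⟨v + tgGe1 g, Sym2.mem_mk_left _ _, by rw [tgE, ← h]; exact Sym2.mem_mk_left _ _⟩
  · exact ⟨v + tgGe1 g, Sym2.mem_mk_left _ _, by rw [tgE, ← h]; exact Sym2.mem_mk_right _ _⟩
  · exact ⟨v + tgGe2 g, Sym2.mem_mk_right _ _, by rw [tgE, ← h]; exact Sym2.mem_mk_left _ _⟩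
  · exact ⟨v + tgGe2 g, Sym2.mem_mk_right _ _, by rw [tgE, ← h]; exact Sym2.mem_mk_right _ _⟩

lemma tg_lab_gap (v : ℤ × ℤ) (f : Sym2 (ℤ × ℤ) → ℕ) (hf : IsL12 (Gv v) f) {i j : Fin 18}
    (hd : tgD2B i j = true) : 2 ≤ |(f (tgE v i) : ℤ) - (f (tgE v j) : ℤ)| := by
  simp only [tgD2B, Bool.and_eq_true, Bool.not_eq_true'] at hd
  obtain ⟨hs, h2⟩ := hd
  have hs' : ¬(tgShareB i j = true) := by simp [hs]
  simp only [tgShareB, Bool.or_eq_true, decide_eq_true_eq, not_or] at hs'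
  obtain ⟨⟨⟨n1, n2⟩, n3⟩, n4⟩ := hs'
  have hex := of_decide_eq_true h2
  apply hf.2 _ (tgE_mem v i) _ (tgE_mem v j)
  · intro h
    rw [tgE, tgE, Sym2.eq_iff] at h
    rcases h with ⟨e1, e2⟩ | ⟨e1, e2⟩
    · exact n1 (add_left_cancel e1)
    · exact n2 (add_left_cancel e1)
  · rintro ⟨u, hu1, hu2⟩
    rw [tgE, Sym2.mem_iff] at hu1 hu2
    rcases hu1 with rfl | rfl <;> rcases hu2 with h | h
    · exact n1 (add_left_cancel h)
    · exact n2 (add_left_cancel h)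
    · exact n3 (add_left_cancel h)
    · exact n4 (add_left_cancel h)
  · obtain ⟨g, hgi, hgj⟩ := hex
    refine ⟨s(v + tgGe1 g, v + tgGe2 g), tgGE_mem v g, ?_, ?_⟩
    · obtain ⟨u, hu1, hu2⟩ := tg_touch v g i hgi
      exact ⟨u, hu2, hu1⟩
    · obtain ⟨u, hu1, hu2⟩ := tg_touch v g j hgj
      exact ⟨u, hu2, hu1⟩

lemma tgL_tab : ∀ i j : Fin 18, tgShareB i j = false → tgD2B i j = false →
    tgFarT i j = true := by decide

lemma tgL_D1 : ∀ i j k : Fin 18, tgFarT i j = true → tgFarT j k = true → tgFarT i k = true →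
    tgCls i = tgCls j ∧ tgCls j = tgCls k ∧ tgFan i ≠ tgFan j ∧ tgFan i ≠ tgFan k ∧
      tgFan j ≠ tgFan k := by decide

lemma tgL_D2 : ∀ (k : Fin 18) (b : Bool), tgCls k ≠ b →
    ∃ F : Fin 3, ∀ p : Fin 3, tgD2B k (tgEnc b F p) = true := by decide

lemma tgL_enc : ∀ i : Fin 18, tgEnc (tgCls i) (tgFan i) (tgPos i) = i := by decide

lemma tgL_inj : ∀ i j : Fin 18, tgCls i = tgCls j → tgFan i = tgFan j → tgPos i = tgPos j →
    i = j := by decide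

lemma tgPigeon : ∀ a b c d : Fin 3, a ≠ b → a ≠ c → b ≠ c → d = a ∨ d = b ∨ d = c := by decide

lemma tgGapAbsurd {a b : ℤ} (h : 2 ≤ |a - b|) (h2 : a - b = 1 ∨ a - b = 0 ∨ a - b = -1) :
    False := by
  rcases le_abs.mp h with h' | h' <;> omega

lemma S3_index (v : ℤ × ℤ) (e : Sym2 (ℤ × ℤ)) : e ∈ S3 v → ∃ i : Fin 18, e = tgE v i := by
  induction e using Sym2.ind with
  | _ x y =>
    intro he
    have hmem : s(x, y) ∈ (Gv v).edgeSet := he.1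
    have hnot : s(x, y) ∉ S1 v ∪ S2 v := he.2
    have hadj : T6.Adj x y ∧ (T6.Adj v x ∨ T6.Adj v y) :=
      (Gv_adj_iff v x y).mp ((Gv v).mem_edgeSet.mp hmem)
    obtain ⟨ht, hvadj⟩ := hadj
    have hv : ¬(v = x ∨ v = y) := fun h =>
      hnot (Set.mem_union_left _ ⟨hmem, Sym2.mem_iff.mpr h⟩)
    have h2 : ¬(T6.Adj v x ∧ T6.Adj v y) := fun h =>
      hnot (Set.mem_union_right _ ⟨hmem, fun u hu => by
        rcases Sym2.mem_iff.mp hu with rfl | rfl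
        exacts [h.1, h.2]⟩)
    rw [T6_adj_iff] at ht
    simp only [T6_adj_iff] at hvadj h2
    simp only [Set.mem_insert_iff, Set.mem_singleton_iff, Prod.mk.injEq] at ht hvadj h2
    have hv' : ¬((v.1 = x.1 ∧ v.2 = x.2) ∨ (v.1 = y.1 ∧ v.2 = y.2)) := by
      simpa [Prod.ext_iff] using hv
    rcases ht with ht | ht | ht | ht | ht | ht <;>
      rcases hvadj with (hv2 | hv2 | hv2 | hv2 | hv2 | hv2) | (hv2 | hv2 | hv2 | hv2 | hv2 | hv2)
    · exact ⟨13, Sym2.eq_iff.mpr (Or.inl ⟨Prod.ext_iff.mpr ⟨show x.1 = v.1 + (1) by omega, show x.2 = v.2 + (0) by omega⟩, Prod.ext_iff.mpr ⟨show y.1 = v.1 + (2) by omega, show y.2 = v.2 + (0) by omega⟩⟩)⟩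
    · exact (hv' (Or.inr ⟨by omega, by omega⟩)).elim
    · exact (h2 ⟨by omega, by omega⟩).elim
    · exact ⟨9, Sym2.eq_iff.mpr (Or.inl ⟨Prod.ext_iff.mpr ⟨show x.1 = v.1 + (0) by omega, show x.2 = v.2 + (-1) by omega⟩, Prod.ext_iff.mpr ⟨show y.1 = v.1 + (1) by omega, show y.2 = v.2 + (-1) by omega⟩⟩)⟩
    · exact ⟨16, Sym2.eq_iff.mpr (Or.inl ⟨Prod.ext_iff.mpr ⟨show x.1 = v.1 + (1) by omega, show x.2 = v.2 + (1) by omega⟩, Prod.ext_iff.mpr ⟨show y.1 = v.1 + (2) by omega, show y.2 = v.2 + (1) by omega⟩⟩)⟩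
    · exact (h2 ⟨by omega, by omega⟩).elim
    · exact (hv' (Or.inl ⟨by omega, by omega⟩)).elim
    · exact ⟨3, Sym2.eq_iff.mpr (Or.inl ⟨Prod.ext_iff.mpr ⟨show x.1 = v.1 + (-2) by omega, show x.2 = v.2 + (0) by omega⟩, Prod.ext_iff.mpr ⟨show y.1 = v.1 + (-1) by omega, show y.2 = v.2 + (0) by omega⟩⟩)⟩
    · exact ⟨7, Sym2.eq_iff.mpr (Or.inl ⟨Prod.ext_iff.mpr ⟨show x.1 = v.1 + (-1) by omega, show x.2 = v.2 + (1) by omega⟩, Prod.ext_iff.mpr ⟨show y.1 = v.1 + (0) by omega, show y.2 = v.2 + (1) by omega⟩⟩)⟩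
    · exact (h2 ⟨by omega, by omega⟩).elim
    · exact (h2 ⟨by omega, by omega⟩).elim
    · exact ⟨1, Sym2.eq_iff.mpr (Or.inl ⟨Prod.ext_iff.mpr ⟨show x.1 = v.1 + (-2) by omega, show x.2 = v.2 + (-1) by omega⟩, Prod.ext_iff.mpr ⟨show y.1 = v.1 + (-1) by omega, show y.2 = v.2 + (-1) by omega⟩⟩)⟩
    · exact (hv' (Or.inr ⟨by omega, by omega⟩)).elim
    · exact ⟨3, Sym2.eq_iff.mpr (Or.inr ⟨Prod.ext_iff.mpr ⟨show x.1 = v.1 + (-1) by omega, show x.2 = v.2 + (0) by omega⟩, Prod.ext_iff.mpr ⟨show y.1 = v.1 + (-2) by omega, show y.2 = v.2 + (0) by omega⟩⟩)⟩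
    · exact ⟨7, Sym2.eq_iff.mpr (Or.inr ⟨Prod.ext_iff.mpr ⟨show x.1 = v.1 + (0) by omega, show x.2 = v.2 + (1) by omega⟩, Prod.ext_iff.mpr ⟨show y.1 = v.1 + (-1) by omega, show y.2 = v.2 + (1) by omega⟩⟩)⟩
    · exact (h2 ⟨by omega, by omega⟩).elim
    · exact (h2 ⟨by omega, by omega⟩).elim
    · exact ⟨1, Sym2.eq_iff.mpr (Or.inr ⟨Prod.ext_iff.mpr ⟨show x.1 = v.1 + (-1) by omega, show x.2 = v.2 + (-1) by omega⟩, Prod.ext_iff.mpr ⟨show y.1 = v.1 + (-2) by omega, show y.2 = v.2 + (-1) by omega⟩⟩)⟩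
    · exact ⟨13, Sym2.eq_iff.mpr (Or.inr ⟨Prod.ext_iff.mpr ⟨show x.1 = v.1 + (2) by omega, show x.2 = v.2 + (0) by omega⟩, Prod.ext_iff.mpr ⟨show y.1 = v.1 + (1) by omega, show y.2 = v.2 + (0) by omega⟩⟩)⟩
    · exact (hv' (Or.inl ⟨by omega, by omega⟩)).elim
    · exact (h2 ⟨by omega, by omega⟩).elim
    · exact ⟨9, Sym2.eq_iff.mpr (Or.inr ⟨Prod.ext_iff.mpr ⟨show x.1 = v.1 + (1) by omega, show x.2 = v.2 + (-1) by omega⟩, Prod.ext_iff.mpr ⟨show y.1 = v.1 + (0) by omega, show y.2 = v.2 + (-1) by omega⟩⟩)⟩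
    · exact ⟨16, Sym2.eq_iff.mpr (Or.inr ⟨Prod.ext_iff.mpr ⟨show x.1 = v.1 + (2) by omega, show x.2 = v.2 + (1) by omega⟩, Prod.ext_iff.mpr ⟨show y.1 = v.1 + (1) by omega, show y.2 = v.2 + (1) by omega⟩⟩)⟩
    · exact (h2 ⟨by omega, by omega⟩).elim
    · exact (h2 ⟨by omega, by omega⟩).elim
    · exact ⟨6, Sym2.eq_iff.mpr (Or.inl ⟨Prod.ext_iff.mpr ⟨show x.1 = v.1 + (-1) by omega, show x.2 = v.2 + (0) by omega⟩, Prod.ext_iff.mpr ⟨show y.1 = v.1 + (-1) by omega, show y.2 = v.2 + (1) by omega⟩⟩)⟩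
    · exact ⟨10, Sym2.eq_iff.mpr (Or.inl ⟨Prod.ext_iff.mpr ⟨show x.1 = v.1 + (0) by omega, show x.2 = v.2 + (1) by omega⟩, Prod.ext_iff.mpr ⟨show y.1 = v.1 + (0) by omega, show y.2 = v.2 + (2) by omega⟩⟩)⟩
    · exact (hv' (Or.inr ⟨by omega, by omega⟩)).elim
    · exact ⟨15, Sym2.eq_iff.mpr (Or.inl ⟨Prod.ext_iff.mpr ⟨show x.1 = v.1 + (1) by omega, show x.2 = v.2 + (1) by omega⟩, Prod.ext_iff.mpr ⟨show y.1 = v.1 + (1) by omega, show y.2 = v.2 + (2) by omega⟩⟩)⟩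
    · exact (h2 ⟨by omega, by omega⟩).elim
    · exact ⟨12, Sym2.eq_iff.mpr (Or.inl ⟨Prod.ext_iff.mpr ⟨show x.1 = v.1 + (1) by omega, show x.2 = v.2 + (-1) by omega⟩, Prod.ext_iff.mpr ⟨show y.1 = v.1 + (1) by omega, show y.2 = v.2 + (0) by omega⟩⟩)⟩
    · exact (h2 ⟨by omega, by omega⟩).elim
    · exact (hv' (Or.inl ⟨by omega, by omega⟩)).elim
    · exact ⟨8, Sym2.eq_iff.mpr (Or.inl ⟨Prod.ext_iff.mpr ⟨show x.1 = v.1 + (0) by omega, show x.2 = v.2 + (-2) by omega⟩, Prod.ext_iff.mpr ⟨show y.1 = v.1 + (0) by omega, show y.2 = v.2 + (-1) by omega⟩⟩)⟩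
    · exact (h2 ⟨by omega, by omega⟩).elim
    · exact ⟨4, Sym2.eq_iff.mpr (Or.inl ⟨Prod.ext_iff.mpr ⟨show x.1 = v.1 + (-1) by omega, show x.2 = v.2 + (-2) by omega⟩, Prod.ext_iff.mpr ⟨show y.1 = v.1 + (-1) by omega, show y.2 = v.2 + (-1) by omega⟩⟩)⟩
    · exact ⟨12, Sym2.eq_iff.mpr (Or.inr ⟨Prod.ext_iff.mpr ⟨show x.1 = v.1 + (1) by omega, show x.2 = v.2 + (0) by omega⟩, Prod.ext_iff.mpr ⟨show y.1 = v.1 + (1) by omega, show y.2 = v.2 + (-1) by omega⟩⟩)⟩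
    · exact (h2 ⟨by omega, by omega⟩).elim
    · exact (hv' (Or.inr ⟨by omega, by omega⟩)).elim
    · exact ⟨8, Sym2.eq_iff.mpr (Or.inr ⟨Prod.ext_iff.mpr ⟨show x.1 = v.1 + (0) by omega, show x.2 = v.2 + (-1) by omega⟩, Prod.ext_iff.mpr ⟨show y.1 = v.1 + (0) by omega, show y.2 = v.2 + (-2) by omega⟩⟩)⟩
    · exact (h2 ⟨by omega, by omega⟩).elim
    · exact ⟨4, Sym2.eq_iff.mpr (Or.inr ⟨Prod.ext_iff.mpr ⟨show x.1 = v.1 + (-1) by omega, show x.2 = v.2 + (-1) by omega⟩, Prod.ext_iff.mpr ⟨show y.1 = v.1 + (-1) by omega, show y.2 = v.2 + (-2) by omega⟩⟩)⟩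
    · exact (h2 ⟨by omega, by omega⟩).elim
    · exact ⟨6, Sym2.eq_iff.mpr (Or.inr ⟨Prod.ext_iff.mpr ⟨show x.1 = v.1 + (-1) by omega, show x.2 = v.2 + (1) by omega⟩, Prod.ext_iff.mpr ⟨show y.1 = v.1 + (-1) by omega, show y.2 = v.2 + (0) by omega⟩⟩)⟩
    · exact ⟨10, Sym2.eq_iff.mpr (Or.inr ⟨Prod.ext_iff.mpr ⟨show x.1 = v.1 + (0) by omega, show x.2 = v.2 + (2) by omega⟩, Prod.ext_iff.mpr ⟨show y.1 = v.1 + (0) by omega, show y.2 = v.2 + (1) by omega⟩⟩)⟩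
    · exact (hv' (Or.inl ⟨by omega, by omega⟩)).elim
    · exact ⟨15, Sym2.eq_iff.mpr (Or.inr ⟨Prod.ext_iff.mpr ⟨show x.1 = v.1 + (1) by omega, show x.2 = v.2 + (2) by omega⟩, Prod.ext_iff.mpr ⟨show y.1 = v.1 + (1) by omega, show y.2 = v.2 + (1) by omega⟩⟩)⟩
    · exact (h2 ⟨by omega, by omega⟩).elim
    · exact ⟨14, Sym2.eq_iff.mpr (Or.inl ⟨Prod.ext_iff.mpr ⟨show x.1 = v.1 + (1) by omega, show x.2 = v.2 + (0) by omega⟩, Prod.ext_iff.mpr ⟨show y.1 = v.1 + (2) by omega, show y.2 = v.2 + (1) by omega⟩⟩)⟩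
    · exact (h2 ⟨by omega, by omega⟩).elim
    · exact ⟨11, Sym2.eq_iff.mpr (Or.inl ⟨Prod.ext_iff.mpr ⟨show x.1 = v.1 + (0) by omega, show x.2 = v.2 + (1) by omega⟩, Prod.ext_iff.mpr ⟨show y.1 = v.1 + (1) by omega, show y.2 = v.2 + (2) by omega⟩⟩)⟩
    · exact (h2 ⟨by omega, by omega⟩).elim
    · exact ⟨17, Sym2.eq_iff.mpr (Or.inl ⟨Prod.ext_iff.mpr ⟨show x.1 = v.1 + (1) by omega, show x.2 = v.2 + (1) by omega⟩, Prod.ext_iff.mpr ⟨show y.1 = v.1 + (2) by omega, show y.2 = v.2 + (2) by omega⟩⟩)⟩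
    · exact (hv' (Or.inr ⟨by omega, by omega⟩)).elim
    · exact (h2 ⟨by omega, by omega⟩).elim
    · exact ⟨2, Sym2.eq_iff.mpr (Or.inl ⟨Prod.ext_iff.mpr ⟨show x.1 = v.1 + (-2) by omega, show x.2 = v.2 + (-1) by omega⟩, Prod.ext_iff.mpr ⟨show y.1 = v.1 + (-1) by omega, show y.2 = v.2 + (0) by omega⟩⟩)⟩
    · exact (h2 ⟨by omega, by omega⟩).elim
    · exact ⟨5, Sym2.eq_iff.mpr (Or.inl ⟨Prod.ext_iff.mpr ⟨show x.1 = v.1 + (-1) by omega, show x.2 = v.2 + (-2) by omega⟩, Prod.ext_iff.mpr ⟨show y.1 = v.1 + (0) by omega, show y.2 = v.2 + (-1) by omega⟩⟩)⟩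
    · exact (hv' (Or.inl ⟨by omega, by omega⟩)).elim
    · exact ⟨0, Sym2.eq_iff.mpr (Or.inl ⟨Prod.ext_iff.mpr ⟨show x.1 = v.1 + (-2) by omega, show x.2 = v.2 + (-2) by omega⟩, Prod.ext_iff.mpr ⟨show y.1 = v.1 + (-1) by omega, show y.2 = v.2 + (-1) by omega⟩⟩)⟩
    · exact (h2 ⟨by omega, by omega⟩).elim
    · exact ⟨2, Sym2.eq_iff.mpr (Or.inr ⟨Prod.ext_iff.mpr ⟨show x.1 = v.1 + (-1) by omega, show x.2 = v.2 + (0) by omega⟩, Prod.ext_iff.mpr ⟨show y.1 = v.1 + (-2) by omega, show y.2 = v.2 + (-1) by omega⟩⟩)⟩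
    · exact (h2 ⟨by omega, by omega⟩).elim
    · exact ⟨5, Sym2.eq_iff.mpr (Or.inr ⟨Prod.ext_iff.mpr ⟨show x.1 = v.1 + (0) by omega, show x.2 = v.2 + (-1) by omega⟩, Prod.ext_iff.mpr ⟨show y.1 = v.1 + (-1) by omega, show y.2 = v.2 + (-2) by omega⟩⟩)⟩
    · exact (hv' (Or.inr ⟨by omega, by omega⟩)).elim
    · exact ⟨0, Sym2.eq_iff.mpr (Or.inr ⟨Prod.ext_iff.mpr ⟨show x.1 = v.1 + (-1) by omega, show x.2 = v.2 + (-1) by omega⟩, Prod.ext_iff.mpr ⟨show y.1 = v.1 + (-2) by omega, show y.2 = v.2 + (-2) by omega⟩⟩)⟩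
    · exact ⟨14, Sym2.eq_iff.mpr (Or.inr ⟨Prod.ext_iff.mpr ⟨show x.1 = v.1 + (2) by omega, show x.2 = v.2 + (1) by omega⟩, Prod.ext_iff.mpr ⟨show y.1 = v.1 + (1) by omega, show y.2 = v.2 + (0) by omega⟩⟩)⟩
    · exact (h2 ⟨by omega, by omega⟩).elim
    · exact ⟨11, Sym2.eq_iff.mpr (Or.inr ⟨Prod.ext_iff.mpr ⟨show x.1 = v.1 + (1) by omega, show x.2 = v.2 + (2) by omega⟩, Prod.ext_iff.mpr ⟨show y.1 = v.1 + (0) by omega, show y.2 = v.2 + (1) by omega⟩⟩)⟩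
    · exact (h2 ⟨by omega, by omega⟩).elim
    · exact ⟨17, Sym2.eq_iff.mpr (Or.inr ⟨Prod.ext_iff.mpr ⟨show x.1 = v.1 + (2) by omega, show x.2 = v.2 + (2) by omega⟩, Prod.ext_iff.mpr ⟨show y.1 = v.1 + (1) by omega, show y.2 = v.2 + (1) by omega⟩⟩)⟩
    · exact (hv' (Or.inl ⟨by omega, by omega⟩)).elim

lemma tg_aux (v : ℤ × ℤ) (f : Sym2 (ℤ × ℤ) → ℕ) (hf : IsL12 (Gv v) f) (x : ℕ)
    (j1 j2 j3 k1 k2 k3 l1 l2 l3 : Fin 18)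
    (hj1 : f (tgE v j1) = x) (hj2 : f (tgE v j2) = x) (hj3 : f (tgE v j3) = x)
    (hk1 : f (tgE v k1) = x + 1) (hk2 : f (tgE v k2) = x + 1) (hk3 : f (tgE v k3) = x + 1)
    (hl1 : f (tgE v l1) = x + 2) (hl2 : f (tgE v l2) = x + 2) (hl3 : f (tgE v l3) = x + 2)
    (nj12 : j1 ≠ j2) (nj13 : j1 ≠ j3) (nj23 : j2 ≠ j3)
    (nk12 : k1 ≠ k2) (nk13 : k1 ≠ k3) (nk23 : k2 ≠ k3)
    (nl12 : l1 ≠ l2) (nl13 : l1 ≠ l3) (nl23 : l2 ≠ l3) :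
    ∀ m : Fin 18, (f (tgE v m) : ℤ) ≠ (x : ℤ) - 1 ∧ f (tgE v m) ≠ x + 3 := by
  have farf : ∀ i j : Fin 18, i ≠ j → f (tgE v i) = f (tgE v j) → tgFarT i j = true := by
    intro i j hij hfe
    cases hsh : tgShareB i j with
    | true => exact absurd hfe (tg_lab_ne v f hf hsh hij)
    | false =>
      cases hd : tgD2B i j with
      | true =>
        have hg := tg_lab_gap v f hf hd
        rw [hfe, sub_self, abs_zero] at hg
        exact absurd hg (by norm_num)
      | false => exact tgL_tab i j hsh hd
  obtain ⟨cj12, cj23, fj12, fj13, fj23⟩ :=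
    tgL_D1 j1 j2 j3 (farf j1 j2 nj12 (hj1.trans hj2.symm))
      (farf j2 j3 nj23 (hj2.trans hj3.symm)) (farf j1 j3 nj13 (hj1.trans hj3.symm))
  obtain ⟨ck12, ck23, fk12, fk13, fk23⟩ :=
    tgL_D1 k1 k2 k3 (farf k1 k2 nk12 (hk1.trans hk2.symm))
      (farf k2 k3 nk23 (hk2.trans hk3.symm)) (farf k1 k3 nk13 (hk1.trans hk3.symm))
  obtain ⟨cl12, cl23, fl12, fl13, fl23⟩ :=
    tgL_D1 l1 l2 l3 (farf l1 l2 nl12 (hl1.trans hl2.symm))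
      (farf l2 l3 nl23 (hl2.trans hl3.symm)) (farf l1 l3 nl13 (hl1.trans hl3.symm))
  have memJ : ∀ F : Fin 3, ∃ m, f (tgE v m) = x ∧ tgCls m = tgCls j1 ∧ tgFan m = F := by
    intro F
    rcases tgPigeon (tgFan j1) (tgFan j2) (tgFan j3) F fj12 fj13 fj23 with h | h | h
    · exact ⟨j1, hj1, rfl, h.symm⟩
    · exact ⟨j2, hj2, cj12.symm, h.symm⟩
    · exact ⟨j3, hj3, (cj12.trans cj23).symm, h.symm⟩
  have memK : ∀ F : Fin 3, ∃ m, f (tgE v m) = x + 1 ∧ tgCls m = tgCls k1 ∧ tgFan m = F := by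
    intro F
    rcases tgPigeon (tgFan k1) (tgFan k2) (tgFan k3) F fk12 fk13 fk23 with h | h | h
    · exact ⟨k1, hk1, rfl, h.symm⟩
    · exact ⟨k2, hk2, ck12.symm, h.symm⟩
    · exact ⟨k3, hk3, (ck12.trans ck23).symm, h.symm⟩
  have memL : ∀ F : Fin 3, ∃ m, f (tgE v m) = x + 2 ∧ tgCls m = tgCls l1 ∧ tgFan m = F := by
    intro F
    rcases tgPigeon (tgFan l1) (tgFan l2) (tgFan l3) F fl12 fl13 fl23 with h | h | h
    · exact ⟨l1, hl1, rfl, h.symm⟩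
    · exact ⟨l2, hl2, cl12.symm, h.symm⟩
    · exact ⟨l3, hl3, (cl12.trans cl23).symm, h.symm⟩
  have hkj : tgCls k1 = tgCls j1 := by
    by_contra hne
    obtain ⟨F, hF⟩ := tgL_D2 k1 (tgCls j1) hne
    obtain ⟨m, hfm, hcm, hFm⟩ := memJ F
    have he : tgEnc (tgCls j1) F (tgPos m) = m := by rw [← hcm, ← hFm]; exact tgL_enc m
    have hd := hF (tgPos m)
    rw [he] at hd
    have hg := tg_lab_gap v f hf hd
    rw [hk1, hfm] at hg
    exact tgGapAbsurd hg (Or.inl (by push_cast; ring))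
  have hlj : tgCls l1 = tgCls j1 := by
    by_contra hne
    obtain ⟨F, hF⟩ := tgL_D2 l1 (tgCls j1) hne
    obtain ⟨m, hfm, hcm, hFm⟩ := memK F
    have he : tgEnc (tgCls j1) F (tgPos m) = m := by
      rw [← (hcm.trans hkj), ← hFm]; exact tgL_enc m
    have hd := hF (tgPos m)
    rw [he] at hd
    have hg := tg_lab_gap v f hf hd
    rw [hl1, hfm] at hg
    exact tgGapAbsurd hg (Or.inl (by push_cast; ring))
  intro m
  constructor
  · intro hm1
    by_cases hc : tgCls m = tgCls j1
    · obtain ⟨mj, fmj, cmj, Fmj⟩ := memJ (tgFan m)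
      obtain ⟨mk, fmk, cmk, Fmk⟩ := memK (tgFan m)
      obtain ⟨ml, fml, cml, Fml⟩ := memL (tgFan m)
      have cmk' : tgCls mk = tgCls j1 := cmk.trans hkj
      have cml' : tgCls ml = tgCls j1 := cml.trans hlj
      have njk : mj ≠ mk := fun h => by rw [h, fmk] at fmj; omega
      have njl : mj ≠ ml := fun h => by rw [h, fml] at fmj; omega
      have nkl : mk ≠ ml := fun h => by rw [h, fml] at fmk; omega
      have p1 : tgPos mj ≠ tgPos mk := fun h =>
        njk (tgL_inj _ _ (cmj.trans cmk'.symm) (Fmj.trans Fmk.symm) h)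
      have p2 : tgPos mj ≠ tgPos ml := fun h =>
        njl (tgL_inj _ _ (cmj.trans cml'.symm) (Fmj.trans Fml.symm) h)
      have p3 : tgPos mk ≠ tgPos ml := fun h =>
        nkl (tgL_inj _ _ (cmk'.trans cml'.symm) (Fmk.trans Fml.symm) h)
      rcases tgPigeon _ _ _ (tgPos m) p1 p2 p3 with h | h | h
      · have hm : m = mj := tgL_inj _ _ (hc.trans cmj.symm) Fmj.symm h
        rw [hm, fmj] at hm1; omega
      · have hm : m = mk := tgL_inj _ _ (hc.trans cmk'.symm) Fmk.symm h
        rw [hm, fmk] at hm1; push_cast at hm1; omega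
      · have hm : m = ml := tgL_inj _ _ (hc.trans cml'.symm) Fml.symm h
        rw [hm, fml] at hm1; push_cast at hm1; omega
    · obtain ⟨F, hF⟩ := tgL_D2 m (tgCls j1) hc
      obtain ⟨mj, fmj, cmj, Fmj⟩ := memJ F
      have he : tgEnc (tgCls j1) F (tgPos mj) = mj := by rw [← cmj, ← Fmj]; exact tgL_enc mj
      have hd := hF (tgPos mj)
      rw [he] at hd
      have hg := tg_lab_gap v f hf hd
      rw [fmj] at hg
      rcases le_abs.mp hg with h' | h' <;> omega
  · intro hm2
    by_cases hc : tgCls m = tgCls j1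
    · obtain ⟨mj, fmj, cmj, Fmj⟩ := memJ (tgFan m)
      obtain ⟨mk, fmk, cmk, Fmk⟩ := memK (tgFan m)
      obtain ⟨ml, fml, cml, Fml⟩ := memL (tgFan m)
      have cmk' : tgCls mk = tgCls j1 := cmk.trans hkj
      have cml' : tgCls ml = tgCls j1 := cml.trans hlj
      have njk : mj ≠ mk := fun h => by rw [h, fmk] at fmj; omega
      have njl : mj ≠ ml := fun h => by rw [h, fml] at fmj; omega
      have nkl : mk ≠ ml := fun h => by rw [h, fml] at fmk; omega
      have p1 : tgPos mj ≠ tgPos mk := fun h =>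
        njk (tgL_inj _ _ (cmj.trans cmk'.symm) (Fmj.trans Fmk.symm) h)
      have p2 : tgPos mj ≠ tgPos ml := fun h =>
        njl (tgL_inj _ _ (cmj.trans cml'.symm) (Fmj.trans Fml.symm) h)
      have p3 : tgPos mk ≠ tgPos ml := fun h =>
        nkl (tgL_inj _ _ (cmk'.trans cml'.symm) (Fmk.trans Fml.symm) h)
      rcases tgPigeon _ _ _ (tgPos m) p1 p2 p3 with h | h | h
      · have hm : m = mj := tgL_inj _ _ (hc.trans cmj.symm) Fmj.symm h
        rw [hm, fmj] at hm2; omega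
      · have hm : m = mk := tgL_inj _ _ (hc.trans cmk'.symm) Fmk.symm h
        rw [hm, fmk] at hm2; omega
      · have hm : m = ml := tgL_inj _ _ (hc.trans cml'.symm) Fml.symm h
        rw [hm, fml] at hm2; omega
    · obtain ⟨F, hF⟩ := tgL_D2 m (tgCls j1) hc
      obtain ⟨ml, fml, cml, Fml⟩ := memL F
      have he : tgEnc (tgCls j1) F (tgPos ml) = ml := by
        rw [← (cml.trans hlj), ← Fml]; exact tgL_enc ml
      have hd := hF (tgPos ml)
      rw [he] at hd
      have hg := tg_lab_gap v f hf hd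
      rw [hm2, fml] at hg
      rcases le_abs.mp hg with h' | h' <;> push_cast at h' <;> omega


/-- If each of the three consecutive labels `c`, `c+1`, `c+2` is the label of three
edges of `S_3`, then no edge of `S_3` has label `c-1` and no edge of `S_3` has
label `c+3`. -/

theorem no_four_consecutive_thrice (v : ℤ × ℤ) (f : Sym2 (ℤ × ℤ) → ℕ)
    (hf : IsL12 (Gv v) f) (c : ℕ)
    (h0 : UsedThriceInS3 v f c) (h1 : UsedThriceInS3 v f (c + 1))
    (h2 : UsedThriceInS3 v f (c + 2)) :
    ∀ e ∈ S3 v, (f e : ℤ) ≠ (c : ℤ) - 1 ∧ f e ≠ c + 3 := by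
  obtain ⟨e1, e2, e3, m1, m2, m3, d12, d13, d23, q1, q2, q3⟩ := h0
  obtain ⟨j1, rfl⟩ := S3_index v e1 m1
  obtain ⟨j2, rfl⟩ := S3_index v e2 m2
  obtain ⟨j3, rfl⟩ := S3_index v e3 m3
  obtain ⟨e1, e2, e3, m1', m2', m3', e12, e13, e23, r1, r2, r3⟩ := h1
  obtain ⟨k1, rfl⟩ := S3_index v e1 m1'
  obtain ⟨k2, rfl⟩ := S3_index v e2 m2'
  obtain ⟨k3, rfl⟩ := S3_index v e3 m3'
  obtain ⟨e1, e2, e3, m1'', m2'', m3'', g12, g13, g23, s1, s2, s3⟩ := h2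
  obtain ⟨l1, rfl⟩ := S3_index v e1 m1''
  obtain ⟨l2, rfl⟩ := S3_index v e2 m2''
  obtain ⟨l3, rfl⟩ := S3_index v e3 m3''
  have nj12 : j1 ≠ j2 := fun h => d12 (by rw [h])
  have nj13 : j1 ≠ j3 := fun h => d13 (by rw [h])
  have nj23 : j2 ≠ j3 := fun h => d23 (by rw [h])
  have nk12 : k1 ≠ k2 := fun h => e12 (by rw [h])
  have nk13 : k1 ≠ k3 := fun h => e13 (by rw [h])
  have nk23 : k2 ≠ k3 := fun h => e23 (by rw [h])
  have nl12 : l1 ≠ l2 := fun h => g12 (by rw [h])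
  have nl13 : l1 ≠ l3 := fun h => g13 (by rw [h])
  have nl23 : l2 ≠ l3 := fun h => g23 (by rw [h])
  intro e he
  obtain ⟨m, rfl⟩ := S3_index v e he
  exact tg_aux v f hf c j1 j2 j3 k1 k2 k3 l1 l2 l3 q1 q2 q3 r1 r2 r3 s1 s2 s3
    nj12 nj13 nj23 nk12 nk13 nk23 nl12 nl13 nl23 m
end
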